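/- Theorem 1, case (3): If F ∈ PGL(2,ℤ) satisfies F³ = 1 and F ≠ 1, then the centralizer of F in PGL(2,ℤ) is isomorphic to the cyclic group C₃ of order 3 (i.e. to ZMod 3). -/
import Mathlib


open Matrix

/-- `PGL(2,ℤ)`: the quotient of `GL(2,ℤ)` by its center `{±𝟙}`. -/
abbrev PGL2Z := GL (Fin 2) ℤ ⧸ Subgroup.center (GL (Fin 2) ℤ)

section Aux

lemma PGL2Z.tracedet (a b c d : ℤ) (hcube : (!![a,b;c,d] : Matrix (Fin 2) (Fin 2) ℤ)^3 = 1)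
    (hne : (!![a,b;c,d] : Matrix (Fin 2) (Fin 2) ℤ) ≠ 1) : a + d = -1 ∧ a*d - b*c = 1 := by
  have e : (!![a,b;c,d] : Matrix (Fin 2) (Fin 2) ℤ)^3 = !![a,b;c,d]*!![a,b;c,d]*!![a,b;c,d] := by
    rw [pow_succ, pow_two]
  rw [e] at hcube
  have h00 := congrFun (congrFun hcube 0) 0
  have h01 := congrFun (congrFun hcube 0) 1
  have h10 := congrFun (congrFun hcube 1) 0
  have h11 := congrFun (congrFun hcube 1) 1
  simp [Matrix.mul_apply, Fin.sum_univ_two, Matrix.one_apply] at h00 h01 h10 h11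
  by_cases ht : (a+d)^2 - (a*d - b*c) = 0
  · have h5 : (a+d)^3 = -1 := by linear_combination (a + d + a) * ht - h00
    have h6 : a + d = -1 := by nlinarith [sq_nonneg (a+d+1), sq_nonneg (a+d-1)]
    exact ⟨h6, by nlinarith [ht, h6]⟩
  · exfalso
    have hb : ((a+d)^2 - (a*d-b*c)) * b = 0 := by linear_combination h01
    have hc : ((a+d)^2 - (a*d-b*c)) * c = 0 := by linear_combination h10
    have had : ((a+d)^2 - (a*d-b*c)) * (a - d) = 0 := by linear_combination h00 - h11
    have hb0 : b = 0 := (mul_eq_zero.mp hb).resolve_left ht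
    have hc0 : c = 0 := (mul_eq_zero.mp hc).resolve_left ht
    have had0 : a = d := by have := (mul_eq_zero.mp had).resolve_left ht; omega
    have ha3 : a^3 = 1 := by subst hb0 hc0 had0; linear_combination h00
    have ha1 : a = 1 := by nlinarith [sq_nonneg (a+1), sq_nonneg (a-1)]
    apply hne
    subst hb0 hc0 ha1
    rw [← had0, Matrix.one_fin_two]

lemma PGL2Z.key (a b c d p q r s : ℤ)
    (htr : a + d = -1) (hdet : a*d - b*c = 1)
    (hc00 : p*a + q*c = a*p + b*r) (hc01 : p*b + q*d = a*q + b*s)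
    (hc10 : r*a + s*c = c*p + d*r)
    (hdB : p*s - q*r = 1 ∨ p*s - q*r = -1) :
    (p = 1 ∧ q = 0 ∧ r = 0 ∧ s = 1) ∨ (p = -1 ∧ q = 0 ∧ r = 0 ∧ s = -1) ∨
    (p = a ∧ q = b ∧ r = c ∧ s = d) ∨ (p = -a ∧ q = -b ∧ r = -c ∧ s = -d) ∨
    (p = 1 + a ∧ q = b ∧ r = c ∧ s = 1 + d) ∨
    (p = -(1+a) ∧ q = -b ∧ r = -c ∧ s = -(1+d)) := by
  have h1 : q*c = b*r := by linear_combination hc00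
  obtain ⟨x, y, hp, hq, hr, hs⟩ :
      ∃ x y : ℚ, (p:ℚ) = x + y*a ∧ (q:ℚ) = y*b ∧ (r:ℚ) = y*c ∧ (s:ℚ) = x + y*d := by
    have h1' : (q:ℚ)*c = b*r := by exact_mod_cast h1
    have h2' : (p:ℚ)*b + q*d = a*q + b*s := by exact_mod_cast hc01
    have h3' : (r:ℚ)*a + s*c = c*p + d*r := by exact_mod_cast hc10
    rcases eq_or_ne c 0 with hc | hc
    · rcases eq_or_ne b 0 with hb | hb
      · exfalso; nlinarith [htr, hdet, hb, hc, sq_nonneg (a - d), sq_nonneg (a+d)]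
      · have hb' : (b:ℚ) ≠ 0 := Int.cast_ne_zero.mpr hb
        refine ⟨(p:ℚ) - (q/b)*a, (q:ℚ)/b, by ring, by field_simp, ?_, ?_⟩
        · field_simp
          linear_combination -h1'
        · field_simp
          linear_combination -h2'
    · have hc' : (c:ℚ) ≠ 0 := Int.cast_ne_zero.mpr hc
      refine ⟨(p:ℚ) - (r/c)*a, (r:ℚ)/c, by ring, ?_, by field_simp, ?_⟩
      · field_simp
        linear_combination h1'
      · field_simp
        linear_combination h3'
  have htr' : (a:ℚ) + d = -1 := by exact_mod_cast htr
  have hdet' : (a:ℚ)*d - b*c = 1 := by exact_mod_cast hdet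
  have e1 : 2*x - y = (p:ℚ) + s := by rw [hp, hs]; linear_combination -y * htr'
  have e2 : -x - y = (p:ℚ)*a + q*c + r*b + s*d := by
    rw [hp, hq, hr, hs]
    linear_combination (-x - y*a - y*d + y) * htr' + 2*y*hdet'
  have e3 : x^2 - x*y + y^2 = (p:ℚ)*s - q*r := by
    rw [hp, hq, hr, hs]
    linear_combination -x*y*htr' - y^2*hdet'
  have e4 : x^2 - x*y + y^2 = 1 := by
    rcases hdB with h | h
    · rw [e3]; exact_mod_cast h
    · exfalso
      have : (p:ℚ)*s - q*r = -1 := by exact_mod_cast h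
      nlinarith [e3, this, sq_nonneg (2*x - y), sq_nonneg y]
  obtain ⟨X, hXdef⟩ : ∃ X:ℤ, X = (p + s) - (p*a + q*c + r*b + s*d) := ⟨_, rfl⟩
  obtain ⟨Y, hYdef⟩ : ∃ Y:ℤ, Y = -(p + s) - 2*(p*a + q*c + r*b + s*d) := ⟨_, rfl⟩
  have hX : (X:ℚ) = 3*x := by rw [hXdef]; push_cast; linear_combination e2 - e1
  have hY : (Y:ℚ) = 3*y := by rw [hYdef]; push_cast; linear_combination e1 + 2*e2
  have h9 : X^2 - X*Y + Y^2 = 9 := by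
    have : (X:ℚ)^2 - X*Y + Y^2 = 9 := by rw [hX, hY]; linear_combination 9*e4
    exact_mod_cast this
  have hXl : -3 ≤ X := by nlinarith [sq_nonneg (X - 2*Y), sq_nonneg (X + 3), sq_nonneg (2*X - Y)]
  have hXu : X ≤ 3 := by nlinarith [sq_nonneg (X - 2*Y), sq_nonneg (X - 3), sq_nonneg (2*X - Y)]
  have hYl : -3 ≤ Y := by nlinarith [sq_nonneg (Y - 2*X), sq_nonneg (Y + 3), sq_nonneg (2*Y - X)]
  have hYu : Y ≤ 3 := by nlinarith [sq_nonneg (Y - 2*X), sq_nonneg (Y - 3), sq_nonneg (2*Y - X)]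
  have hXY : (X = 3 ∧ Y = 0) ∨ (X = -3 ∧ Y = 0) ∨ (X = 0 ∧ Y = 3) ∨ (X = 0 ∧ Y = -3) ∨
      (X = 3 ∧ Y = 3) ∨ (X = -3 ∧ Y = -3) := by
    clear hXdef hYdef hX hY
    interval_cases X <;> interval_cases Y <;> omega
  rcases hXY with ⟨hX3, hY3⟩ | ⟨hX3, hY3⟩ | ⟨hX3, hY3⟩ | ⟨hX3, hY3⟩ | ⟨hX3, hY3⟩ | ⟨hX3, hY3⟩
  · left
    rw [hX3] at hX; rw [hY3] at hY
    push_cast at hX hY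
    have hx : x = 1 := by linarith
    have hy : y = 0 := by linarith
    have Hp : (p:ℚ) = (((1 : ℤ) : ℤ):ℚ) := by rw [hp, hx, hy]; push_cast; ring
    have Hq : (q:ℚ) = (((0 : ℤ) : ℤ):ℚ) := by rw [hq, hy]; push_cast; ring
    have Hr : (r:ℚ) = (((0 : ℤ) : ℤ):ℚ) := by rw [hr, hy]; push_cast; ring
    have Hs : (s:ℚ) = (((1 : ℤ) : ℤ):ℚ) := by rw [hs, hx, hy]; push_cast; ring
    exact ⟨by exact_mod_cast Hp, by exact_mod_cast Hq, by exact_mod_cast Hr, by exact_mod_cast Hs⟩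
  · right; left
    rw [hX3] at hX; rw [hY3] at hY
    push_cast at hX hY
    have hx : x = -1 := by linarith
    have hy : y = 0 := by linarith
    have Hp : (p:ℚ) = (((-1 : ℤ) : ℤ):ℚ) := by rw [hp, hx, hy]; push_cast; ring
    have Hq : (q:ℚ) = (((0 : ℤ) : ℤ):ℚ) := by rw [hq, hy]; push_cast; ring
    have Hr : (r:ℚ) = (((0 : ℤ) : ℤ):ℚ) := by rw [hr, hy]; push_cast; ring
    have Hs : (s:ℚ) = (((-1 : ℤ) : ℤ):ℚ) := by rw [hs, hx, hy]; push_cast; ring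
    exact ⟨by exact_mod_cast Hp, by exact_mod_cast Hq, by exact_mod_cast Hr, by exact_mod_cast Hs⟩
  · right; right; left
    rw [hX3] at hX; rw [hY3] at hY
    push_cast at hX hY
    have hx : x = 0 := by linarith
    have hy : y = 1 := by linarith
    have Hp : (p:ℚ) = ((a : ℤ):ℚ) := by rw [hp, hx, hy]; push_cast; ring
    have Hq : (q:ℚ) = ((b : ℤ):ℚ) := by rw [hq, hy]; push_cast; ring
    have Hr : (r:ℚ) = ((c : ℤ):ℚ) := by rw [hr, hy]; push_cast; ring
    have Hs : (s:ℚ) = ((d : ℤ):ℚ) := by rw [hs, hx, hy]; push_cast; ring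
    exact ⟨by exact_mod_cast Hp, by exact_mod_cast Hq, by exact_mod_cast Hr, by exact_mod_cast Hs⟩
  · right; right; right; left
    rw [hX3] at hX; rw [hY3] at hY
    push_cast at hX hY
    have hx : x = 0 := by linarith
    have hy : y = -1 := by linarith
    have Hp : (p:ℚ) = ((-a : ℤ):ℚ) := by rw [hp, hx, hy]; push_cast; ring
    have Hq : (q:ℚ) = ((-b : ℤ):ℚ) := by rw [hq, hy]; push_cast; ring
    have Hr : (r:ℚ) = ((-c : ℤ):ℚ) := by rw [hr, hy]; push_cast; ring
    have Hs : (s:ℚ) = ((-d : ℤ):ℚ) := by rw [hs, hx, hy]; push_cast; ring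
    exact ⟨by exact_mod_cast Hp, by exact_mod_cast Hq, by exact_mod_cast Hr, by exact_mod_cast Hs⟩
  · right; right; right; right; left
    rw [hX3] at hX; rw [hY3] at hY
    push_cast at hX hY
    have hx : x = 1 := by linarith
    have hy : y = 1 := by linarith
    have Hp : (p:ℚ) = ((1 + a : ℤ):ℚ) := by rw [hp, hx, hy]; push_cast; ring
    have Hq : (q:ℚ) = ((b : ℤ):ℚ) := by rw [hq, hy]; push_cast; ring
    have Hr : (r:ℚ) = ((c : ℤ):ℚ) := by rw [hr, hy]; push_cast; ring
    have Hs : (s:ℚ) = ((1 + d : ℤ):ℚ) := by rw [hs, hx, hy]; push_cast; ring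
    exact ⟨by exact_mod_cast Hp, by exact_mod_cast Hq, by exact_mod_cast Hr, by exact_mod_cast Hs⟩
  · right; right; right; right; right
    rw [hX3] at hX; rw [hY3] at hY
    push_cast at hX hY
    have hx : x = -1 := by linarith
    have hy : y = -1 := by linarith
    have Hp : (p:ℚ) = ((-(1+a) : ℤ):ℚ) := by rw [hp, hx, hy]; push_cast; ring
    have Hq : (q:ℚ) = ((-b : ℤ):ℚ) := by rw [hq, hy]; push_cast; ring
    have Hr : (r:ℚ) = ((-c : ℤ):ℚ) := by rw [hr, hy]; push_cast; ring
    have Hs : (s:ℚ) = ((-(1+d) : ℤ):ℚ) := by rw [hs, hx, hy]; push_cast; ring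
    exact ⟨by exact_mod_cast Hp, by exact_mod_cast Hq, by exact_mod_cast Hr, by exact_mod_cast Hs⟩

lemma PGL2Z.val_center (Z : GL (Fin 2) ℤ) (hZ : Z ∈ Subgroup.center (GL (Fin 2) ℤ)) :
    (Z : Matrix (Fin 2) (Fin 2) ℤ) = 1 ∨ (Z : Matrix (Fin 2) (Fin 2) ℤ) = -1 := by
  rw [Subgroup.mem_center_iff] at hZ
  have hE1 : (!![1,1;0,1] : Matrix (Fin 2) (Fin 2) ℤ) * !![1,-1;0,1] = 1 := by decide
  have hE1' : (!![1,-1;0,1] : Matrix (Fin 2) (Fin 2) ℤ) * !![1,1;0,1] = 1 := by decide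
  have hE2 : (!![1,0;1,1] : Matrix (Fin 2) (Fin 2) ℤ) * !![1,0;-1,1] = 1 := by decide
  have hE2' : (!![1,0;-1,1] : Matrix (Fin 2) (Fin 2) ℤ) * !![1,0;1,1] = 1 := by decide
  have h1 := congrArg Units.val (hZ ⟨!![1,1;0,1], !![1,-1;0,1], hE1, hE1'⟩)
  have h2 := congrArg Units.val (hZ ⟨!![1,0;1,1], !![1,0;-1,1], hE2, hE2'⟩)
  rw [Units.val_mul, Units.val_mul] at h1 h2
  have h1a := congrFun (congrFun h1 0) 0
  have h1b := congrFun (congrFun h1 0) 1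
  have h2a := congrFun (congrFun h2 0) 0
  simp [Matrix.mul_apply, Fin.sum_univ_two] at h1a h1b h2a
  have hdet : (Z : Matrix (Fin 2) (Fin 2) ℤ).det = 1 ∨ (Z : Matrix (Fin 2) (Fin 2) ℤ).det = -1 :=
    Int.isUnit_iff.mp ((Matrix.isUnit_iff_isUnit_det _).mp Z.isUnit)
  rw [Matrix.det_fin_two] at hdet
  set N := (Z : Matrix (Fin 2) (Fin 2) ℤ) with hN
  have u1 : N 0 0 = N 1 1 := by omega
  have u2 : N 1 0 = 0 := by omega
  have u3 : N 0 1 = 0 := by omega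
  rw [u1, u2, u3] at hdet
  simp at hdet
  have hsq : N 1 1 * N 1 1 = 1 := by
    rcases hdet with h | h
    · exact h
    · exfalso; nlinarith [mul_self_nonneg (N 1 1)]
  have hone : (-1 : Matrix (Fin 2) (Fin 2) ℤ) = !![-1,0;0,-1] := by decide
  rcases mul_self_eq_one_iff.mp hsq with h | h
  · left
    rw [Matrix.eta_fin_two N, u1, u2, u3, h, Matrix.one_fin_two]
  · right
    rw [Matrix.eta_fin_two N, u1, u2, u3, h, hone]

lemma PGL2Z.neg_one_mem : (-1 : GL (Fin 2) ℤ) ∈ Subgroup.center (GL (Fin 2) ℤ) := by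
  rw [Subgroup.mem_center_iff]
  intro g
  apply Units.ext
  simp

lemma PGL2Z.mk_neg (C : GL (Fin 2) ℤ) :
    (QuotientGroup.mk (-C) : PGL2Z) = QuotientGroup.mk C := by
  have h : -C = C * (-1) := by rw [mul_neg_one]
  rw [h, QuotientGroup.mk_mul, (QuotientGroup.eq_one_iff _).mpr PGL2Z.neg_one_mem, mul_one]

end Aux

/-- If `F ∈ PGL(2,ℤ)` satisfies `F³ = 1`, `F ≠ 1`, then its centralizer is
isomorphic to the cyclic group `C₃` of order 3. -/
theorem PGL2Z_centralizer_of_order_three (F : PGL2Z)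
    (h3 : F ^ 3 = 1) (h1 : F ≠ 1) :
    Nonempty (Subgroup.centralizer {F} ≃* Multiplicative (ZMod 3)) := by
  have fact3 : Fact (Nat.Prime 3) := ⟨by norm_num⟩
  obtain ⟨A0, rfl⟩ := QuotientGroup.mk_surjective F
  have hA3mem : A0 ^ 3 ∈ Subgroup.center (GL (Fin 2) ℤ) := by
    rw [← QuotientGroup.eq_one_iff]
    rw [QuotientGroup.mk_pow]
    exact h3
  obtain ⟨A, hmk, hA3⟩ : ∃ A : GL (Fin 2) ℤ,
      (QuotientGroup.mk A : PGL2Z) = QuotientGroup.mk A0 ∧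
      ((A : Matrix (Fin 2) (Fin 2) ℤ))^3 = 1 := by
    rcases PGL2Z.val_center _ hA3mem with h | h
    · exact ⟨A0, rfl, by rw [← Units.val_pow_eq_pow_val]; exact h⟩
    · refine ⟨-A0, PGL2Z.mk_neg A0, ?_⟩
      rw [Units.val_neg, Odd.neg_pow (by decide), ← Units.val_pow_eq_pow_val, h, neg_neg]
  rw [← hmk] at h3 h1 ⊢
  have hAne : (A : Matrix (Fin 2) (Fin 2) ℤ) ≠ 1 := by
    intro h
    exact h1 (by rw [show A = 1 from Units.ext h]; exact QuotientGroup.mk_one _)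
  set a := (A : Matrix (Fin 2) (Fin 2) ℤ) 0 0 with ha
  set b := (A : Matrix (Fin 2) (Fin 2) ℤ) 0 1 with hb
  set c := (A : Matrix (Fin 2) (Fin 2) ℤ) 1 0 with hc
  set d := (A : Matrix (Fin 2) (Fin 2) ℤ) 1 1 with hd
  have hMeta : (A : Matrix (Fin 2) (Fin 2) ℤ) = !![a,b;c,d] := Matrix.eta_fin_two _
  rw [hMeta] at hA3 hAne
  obtain ⟨htr, hdet⟩ := PGL2Z.tracedet a b c d hA3 hAne
  -- A^2 as a matrix
  have hM2 : (A : Matrix (Fin 2) (Fin 2) ℤ) * (A : Matrix (Fin 2) (Fin 2) ℤ)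
      = !![-1-a, -b; -c, -1-d] := by
    rw [hMeta]
    ext i j
    fin_cases i <;> fin_cases j <;>
      simp [Matrix.mul_apply, Fin.sum_univ_two] <;>
      first
        | linear_combination a*htr - hdet
        | linear_combination b*htr
        | linear_combination c*htr
        | linear_combination d*htr - hdet
  have hle1 : Subgroup.zpowers (QuotientGroup.mk A : PGL2Z) ≤
      Subgroup.centralizer {(QuotientGroup.mk A : PGL2Z)} := by
    intro S hS
    rw [Subgroup.mem_centralizer_iff]
    rintro x hx
    rcases hx with rfl
    obtain ⟨k, rfl⟩ := Subgroup.mem_zpowers_iff.mp hS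
    exact ((Commute.refl _).zpow_right k).eq
  have hle2 : Subgroup.centralizer {(QuotientGroup.mk A : PGL2Z)} ≤
      Subgroup.zpowers (QuotientGroup.mk A : PGL2Z) := by
    intro S hS
    obtain ⟨B, rfl⟩ := QuotientGroup.mk_surjective S
    rw [Subgroup.mem_centralizer_iff] at hS
    have hcom := hS _ (Set.mem_singleton _)
    have hmm : ((A * B : GL (Fin 2) ℤ) : PGL2Z) = ((B * A : GL (Fin 2) ℤ) : PGL2Z) := by
      rw [QuotientGroup.mk_mul, QuotientGroup.mk_mul]
      exact hcom
    have hmem := QuotientGroup.eq.mp hmm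
    have hABC : (A*B) * ((A*B)⁻¹ * (B*A)) = B * A := by group
    have hval := PGL2Z.val_center _ hmem
    have h' := congrArg Units.val hABC
    rw [Units.val_mul] at h'
    rcases hval with h | h
    · -- commuting case
      rw [h, mul_one, Units.val_mul, Units.val_mul] at h'
      -- h' : A.val * B.val = B.val * A.val
      have hcm : (B : Matrix (Fin 2) (Fin 2) ℤ) * !![a,b;c,d]
          = !![a,b;c,d] * (B : Matrix (Fin 2) (Fin 2) ℤ) := by
        rw [← hMeta]; exact h'.symm
      have h00 := congrFun (congrFun hcm 0) 0
      have h01 := congrFun (congrFun hcm 0) 1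
      have h10 := congrFun (congrFun hcm 1) 0
      simp [Matrix.mul_apply, Fin.sum_univ_two] at h00 h01 h10
      have hdB : (B : Matrix (Fin 2) (Fin 2) ℤ) 0 0 * (B : Matrix (Fin 2) (Fin 2) ℤ) 1 1
          - (B : Matrix (Fin 2) (Fin 2) ℤ) 0 1 * (B : Matrix (Fin 2) (Fin 2) ℤ) 1 0 = 1 ∨
          (B : Matrix (Fin 2) (Fin 2) ℤ) 0 0 * (B : Matrix (Fin 2) (Fin 2) ℤ) 1 1
          - (B : Matrix (Fin 2) (Fin 2) ℤ) 0 1 * (B : Matrix (Fin 2) (Fin 2) ℤ) 1 0 = -1 := by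
        have := Int.isUnit_iff.mp ((Matrix.isUnit_iff_isUnit_det _).mp B.isUnit)
        rw [Matrix.det_fin_two] at this
        exact this
      have hk := PGL2Z.key a b c d
        ((B : Matrix (Fin 2) (Fin 2) ℤ) 0 0) ((B : Matrix (Fin 2) (Fin 2) ℤ) 0 1)
        ((B : Matrix (Fin 2) (Fin 2) ℤ) 1 0) ((B : Matrix (Fin 2) (Fin 2) ℤ) 1 1)
        htr hdet (by linear_combination h00) (by linear_combination h01)
        (by linear_combination h10) hdB
      have hBeta : (B : Matrix (Fin 2) (Fin 2) ℤ) =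
          !![(B : Matrix (Fin 2) (Fin 2) ℤ) 0 0, (B : Matrix (Fin 2) (Fin 2) ℤ) 0 1;
             (B : Matrix (Fin 2) (Fin 2) ℤ) 1 0, (B : Matrix (Fin 2) (Fin 2) ℤ) 1 1] :=
        Matrix.eta_fin_two _
      rcases hk with ⟨e1,e2,e3,e4⟩ | ⟨e1,e2,e3,e4⟩ | ⟨e1,e2,e3,e4⟩ | ⟨e1,e2,e3,e4⟩ |
        ⟨e1,e2,e3,e4⟩ | ⟨e1,e2,e3,e4⟩
      · -- B = 1
        have : B = 1 := Units.ext (by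
          rw [hBeta, e1, e2, e3, e4]; exact Matrix.one_fin_two.symm)
        rw [this, QuotientGroup.mk_one]
        exact Subgroup.one_mem _
      · -- B = -1
        have : B = -1 := Units.ext (by
          rw [hBeta, e1, e2, e3, e4, Units.val_neg, Units.val_one]; decide)
        rw [this, PGL2Z.mk_neg, QuotientGroup.mk_one]
        exact Subgroup.one_mem _
      · -- B = A
        have : B = A := Units.ext (by rw [hBeta, e1, e2, e3, e4, ← hMeta])
        rw [this]
        exact Subgroup.mem_zpowers _
      · -- B = -A
        have : B = -A := Units.ext (by
          rw [hBeta, e1, e2, e3, e4, Units.val_neg, hMeta]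
          ext i j; fin_cases i <;> fin_cases j <;> simp)
        rw [this, PGL2Z.mk_neg]
        exact Subgroup.mem_zpowers _
      · -- B = -(A*A)
        have : B = -(A*A) := Units.ext (by
          rw [hBeta, e1, e2, e3, e4, Units.val_neg, Units.val_mul, hM2]
          ext i j; fin_cases i <;> fin_cases j <;> simp <;> ring)
        rw [this, PGL2Z.mk_neg, QuotientGroup.mk_mul]
        exact Subgroup.mul_mem _ (Subgroup.mem_zpowers _) (Subgroup.mem_zpowers _)
      · -- B = A*A
        have : B = A*A := Units.ext (by
          rw [hBeta, e1, e2, e3, e4, Units.val_mul, hM2]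
          ext i j; fin_cases i <;> fin_cases j <;> simp <;> ring)
        rw [this, QuotientGroup.mk_mul]
        exact Subgroup.mul_mem _ (Subgroup.mem_zpowers _) (Subgroup.mem_zpowers _)
    · -- anticommuting case : contradiction
      exfalso
      rw [h, Units.val_mul, Units.val_mul] at h'
      -- h' : A.val * B.val * (-1) = B.val * A.val
      have hBB : ((B⁻¹ : GL (Fin 2) ℤ) : Matrix (Fin 2) (Fin 2) ℤ)
          * (B : Matrix (Fin 2) (Fin 2) ℤ) = 1 := by
        rw [← Units.val_mul, inv_mul_cancel, Units.val_one]
      have hBB' : (B : Matrix (Fin 2) (Fin 2) ℤ)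
          * ((B⁻¹ : GL (Fin 2) ℤ) : Matrix (Fin 2) (Fin 2) ℤ) = 1 := by
        rw [← Units.val_mul, mul_inv_cancel, Units.val_one]
      have htrace : Matrix.trace ((B : Matrix (Fin 2) (Fin 2) ℤ)
          * (A : Matrix (Fin 2) (Fin 2) ℤ) * ((B⁻¹ : GL (Fin 2) ℤ) : Matrix (Fin 2) (Fin 2) ℤ))
          = Matrix.trace (A : Matrix (Fin 2) (Fin 2) ℤ) := by
        rw [Matrix.trace_mul_comm, ← mul_assoc, hBB, one_mul]
      have heq2 : (B : Matrix (Fin 2) (Fin 2) ℤ) * (A : Matrix (Fin 2) (Fin 2) ℤ)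
          * ((B⁻¹ : GL (Fin 2) ℤ) : Matrix (Fin 2) (Fin 2) ℤ)
          = -(A : Matrix (Fin 2) (Fin 2) ℤ) := by
        rw [← h', mul_neg_one, neg_mul, mul_assoc, hBB', mul_one]
      rw [heq2, Matrix.trace_neg] at htrace
      rw [hMeta, Matrix.trace_fin_two] at htrace
      simp at htrace
      omega
  have heq : Subgroup.centralizer {(QuotientGroup.mk A : PGL2Z)}
      = Subgroup.zpowers (QuotientGroup.mk A : PGL2Z) := le_antisymm hle2 hle1
  have horder : orderOf (QuotientGroup.mk A : PGL2Z) = 3 := orderOf_eq_prime h3 h1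
  have hcard : Nat.card (Subgroup.centralizer {(QuotientGroup.mk A : PGL2Z)}) = 3 := by
    rw [heq, Nat.card_zpowers, horder]
  exact ⟨mulEquivOfPrimeCardEq hcard (by simp [Nat.card_eq_fintype_card])⟩
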